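/- Let γ > 2 and let (M_N) be a sequence of positive integers with M_N ≥ 2N + 2 and M_N/N → γ as N → ∞. Set γ_N = M_N/N, a_{N,n} = (M_N − N − n + 1)/2 for 1 ≤ n ≤ N, b_N = (N+1)/2, and m_N = M_N·[ log(γ_N/(γ_N−1)) + ((γ_N−2)/γ_N)·log((γ_N−2)/(γ_N−1)) ] + (1/2)·log(γ_N/(γ_N−2)). Then the mean of the log-GLRT statistic under the properness hypothesis satisfies Σ_{n=1}^N ( ψ(a_{N,n} + b_N) − ψ(a_{N,n}) ) − m_N → 0 as N → ∞. -/

import Mathlib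

open MeasureTheory Real Filter

/-- The digamma function: the derivative of `log Γ` on `(0, ∞)`. -/
noncomputable def digamma (x : ℝ) : ℝ :=
  deriv (fun y => Real.log (Real.Gamma y)) x

lemma hasDerivAt_logGamma {x : ℝ} (hx : 0 < x) :
    HasDerivAt (fun y => Real.log (Real.Gamma y)) (digamma x) x := by
  have hd : DifferentiableAt ℝ Real.Gamma x := by
    apply Real.differentiableAt_Gamma
    intro m
    have : (0:ℝ) ≤ m := Nat.cast_nonneg m
    intro h
    rw [h] at hx
    linarith
  have h0 : Real.Gamma x ≠ 0 := (Real.Gamma_pos_of_pos hx).ne'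
  exact (hd.log h0).hasDerivAt

lemma digamma_add_one {x : ℝ} (hx : 0 < x) : digamma (x + 1) = digamma x + 1 / x := by
  have h1 : HasDerivAt (fun y : ℝ => Real.log (Real.Gamma (y + 1))) (digamma (x + 1)) x := by
    simpa [Function.comp_def] using (hasDerivAt_logGamma (by linarith : (0:ℝ) < x + 1)).comp x
      ((hasDerivAt_id x).add_const 1)
  have h2 : (fun y : ℝ => Real.log (Real.Gamma (y + 1)))
      =ᶠ[nhds x] fun y => Real.log y + Real.log (Real.Gamma y) := by
    filter_upwards [eventually_gt_nhds hx] with y hy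
    rw [Real.Gamma_add_one hy.ne', Real.log_mul hy.ne' (Real.Gamma_pos_of_pos hy).ne']
  have h3 : HasDerivAt (fun y : ℝ => Real.log y + Real.log (Real.Gamma y))
      (1 / x + digamma x) x := by
    simpa [one_div] using (show HasDerivAt (fun y : ℝ => Real.log y + Real.log (Real.Gamma y))
      (x⁻¹ + digamma x) x from (Real.hasDerivAt_log hx.ne').add (hasDerivAt_logGamma hx))
  have := (h3.congr_of_eventuallyEq h2).unique h1
  linarith

lemma digamma_add_nat {x : ℝ} (hx : 0 < x) (k : ℕ) :
    digamma (x + k) = digamma x + ∑ i ∈ Finset.range k, 1 / (x + i) := by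
  induction k with
  | zero => simp
  | succ k ih =>
    have hxk : 0 < x + k := by positivity
    have : x + (k + 1 : ℕ) = (x + k) + 1 := by push_cast; ring
    rw [this, digamma_add_one hxk, ih, Finset.sum_range_succ]
    ring

lemma log_mid_bound {d : ℝ} (hd : 2 ≤ d) :
    |Real.log (d + 1) - Real.log (d - 1) - 2 / d| ≤ 2 / (d ^ 2 * (d - 1)) := by
  have hd0 : 0 < d := by linarith
  set u : ℝ := 1 / d with hu_def
  have hu0 : 0 < u := by positivity
  have hu1 : u ≤ 1 / 2 := by
    rw [hu_def]
    exact one_div_le_one_div_of_le (by norm_num) hd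
  have habs : |u| < 1 := by rw [abs_of_pos hu0]; linarith
  have h1 := Real.abs_log_sub_add_sum_range_le habs 2
  have h2 := Real.abs_log_sub_add_sum_range_le (by rwa [abs_neg] : |(-u)| < 1) 2
  rw [Finset.sum_range_succ, Finset.sum_range_succ, Finset.sum_range_zero] at h1 h2
  norm_num at h1 h2
  rw [abs_of_pos hu0] at h1 h2
  have e1 : Real.log (1 - u) = Real.log (d - 1) - Real.log d := by
    rw [← Real.log_div (by linarith) hd0.ne']
    congr 1
    rw [hu_def]
    field_simp
  have e2 : Real.log (1 + u) = Real.log (d + 1) - Real.log d := by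
    rw [← Real.log_div (by linarith) hd0.ne']
    congr 1
    rw [hu_def]
    field_simp
  rw [e1] at h1
  rw [e2] at h2
  have expand : Real.log (d + 1) - Real.log (d - 1) - 2 / d =
      (-u + u ^ 2 / 2 + (Real.log (d + 1) - Real.log d)) -
        (u + u ^ 2 / 2 + (Real.log (d - 1) - Real.log d)) := by
    have h2u : (2 : ℝ) / d = 2 * u := by rw [hu_def]; ring
    rw [h2u]
    ring
  have key := (abs_sub (-u + u ^ 2 / 2 + (Real.log (d + 1) - Real.log d))
      (u + u ^ 2 / 2 + (Real.log (d - 1) - Real.log d)))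
  rw [← expand] at key
  have heq : u ^ 3 / (1 - u) = 1 / (d ^ 2 * (d - 1)) := by
    rw [hu_def]
    have hA : (0:ℝ) < 1 - 1 / d := by
      have := hu1
      rw [hu_def] at this
      linarith
    have hB : (0:ℝ) < d ^ 2 * (d - 1) := by nlinarith
    rw [div_eq_div_iff hA.ne' hB.ne']
    field_simp
  calc |Real.log (d + 1) - Real.log (d - 1) - 2 / d|
      ≤ u ^ 3 / (1 - u) + u ^ 3 / (1 - u) := by linarith
    _ = 2 / (d ^ 2 * (d - 1)) := by rw [heq]; ring

noncomputable def logFact (m : ℕ) : ℝ := ∑ j ∈ Finset.Ioc 0 m, Real.log j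

noncomputable def stirlingRem (m : ℕ) : ℝ :=
  logFact m - ((m : ℝ) + 1 / 2) * Real.log m + m

lemma logFact_eq (m : ℕ) : logFact m = Real.log (Nat.factorial m) := by
  have h : Finset.Ioc 0 m = Finset.Ico 1 (m + 1) := by
    ext j; simp [Nat.lt_succ_iff]; omega
  rw [logFact, h, ← Finset.prod_Ico_id_eq_factorial, Nat.cast_prod, Real.log_prod]
  intro j hj
  simp only [Finset.mem_Ico] at hj
  exact Nat.cast_ne_zero.mpr (by omega)

lemma stirlingRem_eq {m : ℕ} (hm : 1 ≤ m) :
    stirlingRem m = Real.log (Stirling.stirlingSeq m) + (1 / 2) * Real.log 2 := by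
  have hm0 : (0:ℝ) < m := by exact_mod_cast hm
  have hfac : (0:ℝ) < (Nat.factorial m : ℝ) := by exact_mod_cast (Nat.factorial_pos m)
  have hsq : (0:ℝ) < Real.sqrt (2 * m) := Real.sqrt_pos.mpr (by positivity)
  have hpow : (0:ℝ) < ((m : ℝ) / Real.exp 1) ^ m := by positivity
  rw [stirlingRem, logFact_eq, Stirling.stirlingSeq, Real.log_div hfac.ne' (by positivity),
    Real.log_mul hsq.ne' hpow.ne', Real.log_sqrt (by positivity), Real.log_pow,
    Real.log_div hm0.ne' (Real.exp_ne_zero 1), Real.log_exp,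
    Real.log_mul (by norm_num) hm0.ne']
  ring

lemma stirlingRem_tendsto :
    Tendsto stirlingRem atTop
      (nhds (Real.log (Real.sqrt Real.pi) + (1 / 2) * Real.log 2)) := by
  have h1 : Tendsto (fun m : ℕ => Real.log (Stirling.stirlingSeq m)) atTop
      (nhds (Real.log (Real.sqrt Real.pi))) :=
    ((Real.continuousAt_log (Real.sqrt_pos.mpr Real.pi_pos).ne').tendsto).comp
      Stirling.tendsto_stirlingSeq_sqrt_pi
  have h2 := h1.add_const ((1 / 2) * Real.log 2)
  refine h2.congr' ?_
  filter_upwards [eventually_ge_atTop 1] with m hm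
  exact (stirlingRem_eq hm).symm

lemma tendsto_half_log_ratio :
    Tendsto (fun x : ℝ => (x - 1 / 2) * (Real.log x - Real.log (x - 1))) atTop (nhds 1) := by
  have h1 : Tendsto (fun x : ℝ => (x - 1) * Real.log (1 + 1 / (x - 1))) atTop (nhds 1) := by
    have := (Real.tendsto_mul_log_one_add_div_atTop 1).comp
      (tendsto_atTop_add_const_right atTop (-1 : ℝ) tendsto_id)
    simpa [Function.comp_def, sub_eq_add_neg] using this
  have h2 : Tendsto (fun x : ℝ => (1 / 2) * Real.log (1 + 1 / (x - 1))) atTop (nhds 0) := by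
    have hinv : Tendsto (fun x : ℝ => 1 + 1 / (x - 1)) atTop (nhds 1) := by
      have := (tendsto_inv_atTop_zero).comp
        (tendsto_atTop_add_const_right atTop (-1 : ℝ) tendsto_id)
      have h := this.const_add (1 : ℝ)
      simpa [Function.comp, one_div, sub_eq_add_neg] using h
    have hlog : Tendsto (fun x : ℝ => Real.log (1 + 1 / (x - 1))) atTop (nhds 0) := by
      have := ((Real.continuousAt_log (by norm_num : (1:ℝ) ≠ 0)).tendsto).comp hinv
      simpa [Function.comp_def] using this
    simpa using hlog.const_mul (1 / 2 : ℝ)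
  have h3 := h1.add h2
  rw [add_zero] at h3
  refine h3.congr' ?_
  filter_upwards [eventually_ge_atTop (2 : ℝ)] with x hx
  have hx1 : (0:ℝ) < x - 1 := by linarith
  have hlogeq : Real.log x - Real.log (x - 1) = Real.log (1 + 1 / (x - 1)) := by
    rw [← Real.log_div (by linarith) hx1.ne']
    congr 1
    field_simp
    ring
  rw [hlogeq]
  ring

lemma sum_Icc_reflect (f : ℕ → ℝ) (N : ℕ) :
    ∑ n ∈ Finset.Icc 1 N, f (N + 1 - n) = ∑ n ∈ Finset.Icc 1 N, f n := by
  refine Finset.sum_nbij' (fun n => N + 1 - n) (fun n => N + 1 - n) ?_ ?_ ?_ ?_ ?_ <;>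
    (intro a ha; simp only [Finset.mem_Icc] at *) <;> first | omega | (congr 1; omega)

lemma sum_Icc_shift_reflect (g : ℕ → ℝ) (a N : ℕ) (h : N ≤ a) :
    ∑ n ∈ Finset.Icc 1 N, g (a + 1 - n) = ∑ j ∈ Finset.Ioc (a - N) a, g j := by
  refine Finset.sum_nbij' (fun n => a + 1 - n) (fun j => a + 1 - j) ?_ ?_ ?_ ?_ ?_ <;>
    (intro x hx; simp only [Finset.mem_Icc, Finset.mem_Ioc] at *) <;>
    first | omega | (congr 1; omega)

lemma sum_Ioc_logFact {a b : ℕ} (hab : a ≤ b) :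
    ∑ j ∈ Finset.Ioc a b, Real.log j = logFact b - logFact a := by
  have := Finset.sum_Ioc_consecutive (fun j : ℕ => Real.log j) (Nat.zero_le a) hab
  rw [logFact, logFact]
  linarith

lemma telescope_log (a : ℝ) (k : ℕ) :
    ∑ i ∈ Finset.range k, (Real.log (a + 2 * i + 1) - Real.log (a + 2 * i - 1))
      = Real.log (a + 2 * k - 1) - Real.log (a - 1) := by
  have h := Finset.sum_range_sub (fun i : ℕ => Real.log (a + 2 * i - 1)) k
  simp only [Nat.cast_zero] at h
  rw [show a + 2 * (0:ℝ) - 1 = a - 1 by ring] at h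
  rw [← h]
  apply Finset.sum_congr rfl
  intro i _
  push_cast
  rw [show a + 2 * ((i : ℝ) + 1) - 1 = a + 2 * i + 1 by ring]

noncomputable def Dsum (K N : ℕ) : ℝ :=
  ∑ n ∈ Finset.Icc 1 N, ∑ i ∈ Finset.range (N + 1 - n),
    2 / ((K : ℝ) - 2 * N + n + 2 * i)

noncomputable def LFsum (K N : ℕ) : ℝ :=
  ∑ n ∈ Finset.Icc 1 N,
    (Real.log ((K : ℝ) - n + 1) - Real.log ((K : ℝ) - 2 * N + n - 1))

lemma digamma_sum_eq {K N : ℕ} (h : 2 * N + 2 ≤ K) :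
    ∑ n ∈ Finset.Icc 1 N,
      (digamma (((K : ℝ) - N - n + 1) / 2 + ((N : ℝ) + 1) / 2)
        - digamma (((K : ℝ) - N - n + 1) / 2)) = Dsum K N := by
  have hK : (2 * N + 2 : ℝ) ≤ K := by exact_mod_cast h
  have hrefl : ∑ n ∈ Finset.Icc 1 N, digamma (((K : ℝ) - N - n + 1) / 2)
      = ∑ n ∈ Finset.Icc 1 N, digamma (((K : ℝ) - 2 * N + n) / 2) := by
    rw [← sum_Icc_reflect (fun n : ℕ => digamma (((K : ℝ) - N - n + 1) / 2)) N]
    apply Finset.sum_congr rfl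
    intro n hn
    simp only [Finset.mem_Icc] at hn
    congr 2
    have : ((N + 1 - n : ℕ) : ℝ) = (N : ℝ) + 1 - n := by
      have : n ≤ N + 1 := by omega
      push_cast [this]
      ring
    rw [this]
    ring
  rw [Finset.sum_sub_distrib, hrefl, ← Finset.sum_sub_distrib]
  apply Finset.sum_congr rfl
  intro n hn
  simp only [Finset.mem_Icc] at hn
  set x : ℝ := ((K : ℝ) - 2 * N + n) / 2 with hx_def
  have hx : 0 < x := by
    rw [hx_def]
    have : (0:ℝ) ≤ n := Nat.cast_nonneg n
    linarith
  have hcast : ((N + 1 - n : ℕ) : ℝ) = (N : ℝ) + 1 - n := by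
    have : n ≤ N + 1 := by omega
    push_cast [this]
    ring
  have harg : ((K : ℝ) - N - n + 1) / 2 + ((N : ℝ) + 1) / 2 = x + ((N + 1 - n : ℕ) : ℝ) := by
    rw [hcast, hx_def]
    ring
  rw [harg, digamma_add_nat hx (N + 1 - n)]
  rw [add_sub_cancel_left]
  apply Finset.sum_congr rfl
  intro i _
  rw [hx_def]
  rw [show ((K : ℝ) - 2 * N + n) / 2 + i = ((K : ℝ) - 2 * N + n + 2 * i) / 2 by ring,
    one_div_div]

lemma D_LF_bound {K N : ℕ} (h : 2 * N + 2 ≤ K) :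
    |Dsum K N - LFsum K N| ≤ 2 * N ^ 2 / ((K : ℝ) - 2 * N) ^ 3 := by
  have hK : (2 * N + 2 : ℝ) ≤ K := by exact_mod_cast h
  set c : ℝ := (K : ℝ) - 2 * N with hc_def
  have hc : 2 ≤ c := by rw [hc_def]; linarith
  have hc0 : 0 < c := by linarith
  have hLF : LFsum K N = ∑ n ∈ Finset.Icc 1 N, ∑ i ∈ Finset.range (N + 1 - n),
      (Real.log ((K : ℝ) - 2 * N + n + 2 * i + 1)
        - Real.log ((K : ℝ) - 2 * N + n + 2 * i - 1)) := by
    rw [LFsum]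
    apply Finset.sum_congr rfl
    intro n hn
    simp only [Finset.mem_Icc] at hn
    have hk := telescope_log ((K : ℝ) - 2 * N + n) (N + 1 - n)
    have hcast : ((N + 1 - n : ℕ) : ℝ) = (N : ℝ) + 1 - n := by
      have : n ≤ N + 1 := by omega
      push_cast [this]
      ring
    rw [hcast] at hk
    rw [show (K : ℝ) - 2 * N + n + 2 * ((N : ℝ) + 1 - n) - 1 = (K : ℝ) - n + 1 by ring] at hk
    rw [show (K : ℝ) - 2 * N + n - 1 = (K : ℝ) - 2 * N + n - 1 by ring] at hk
    rw [← hk]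
  rw [hLF, Dsum, ← Finset.sum_sub_distrib]
  have step1 : ∀ n ∈ Finset.Icc 1 N,
      |∑ i ∈ Finset.range (N + 1 - n), (2 / ((K : ℝ) - 2 * N + n + 2 * i))
        - ∑ i ∈ Finset.range (N + 1 - n),
          (Real.log ((K : ℝ) - 2 * N + n + 2 * i + 1)
            - Real.log ((K : ℝ) - 2 * N + n + 2 * i - 1))|
      ≤ (N : ℝ) * (2 / c ^ 3) := by
    intro n hn
    simp only [Finset.mem_Icc] at hn
    rw [← Finset.sum_sub_distrib]
    refine (Finset.abs_sum_le_sum_abs _ _).trans ?_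
    have hterm : ∀ i ∈ Finset.range (N + 1 - n),
        |2 / ((K : ℝ) - 2 * N + n + 2 * i)
          - (Real.log ((K : ℝ) - 2 * N + n + 2 * i + 1)
            - Real.log ((K : ℝ) - 2 * N + n + 2 * i - 1))| ≤ 2 / c ^ 3 := by
      intro i _
      set d : ℝ := (K : ℝ) - 2 * N + n + 2 * i with hd_def
      have hn1 : (1 : ℝ) ≤ n := by exact_mod_cast hn.1
      have hi0 : (0 : ℝ) ≤ i := Nat.cast_nonneg i
      have hdc : c + 1 ≤ d := by rw [hd_def, hc_def]; linarith
      have hd2 : 2 ≤ d := by linarith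
      rw [abs_sub_comm]
      refine (log_mid_bound hd2).trans ?_
      have hm : c ^ 3 ≤ d ^ 2 * (d - 1) := by
        have h1 : c ≤ d - 1 := by linarith
        have h2 : c ^ 2 ≤ d ^ 2 := by nlinarith
        calc c ^ 3 = c ^ 2 * c := by ring
          _ ≤ d ^ 2 * (d - 1) := mul_le_mul h2 h1 hc0.le (by positivity)
      exact div_le_div_of_nonneg_left (by norm_num) (by positivity) hm
    refine (Finset.sum_le_sum hterm).trans ?_
    rw [Finset.sum_const, nsmul_eq_mul, Finset.card_range]
    have : ((N + 1 - n : ℕ) : ℝ) ≤ N := by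
      have : N + 1 - n ≤ N := by omega
      exact_mod_cast this
    have h2c : (0:ℝ) ≤ 2 / c ^ 3 := by positivity
    exact mul_le_mul_of_nonneg_right this h2c
  refine (Finset.abs_sum_le_sum_abs _ _).trans ?_
  refine (Finset.sum_le_sum step1).trans ?_
  rw [Finset.sum_const, nsmul_eq_mul, Nat.card_Icc]
  have hcard : ((N + 1 - 1 : ℕ) : ℝ) = N := by norm_num
  rw [hcard]
  rw [show (N : ℝ) * ((N : ℝ) * (2 / c ^ 3)) = 2 * N ^ 2 / c ^ 3 by ring]

lemma LF_eq {K N : ℕ} (h : 2 * N + 2 ≤ K) :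
    LFsum K N = (logFact K - logFact (K - N))
      - (logFact (K - N - 1) - logFact (K - 2 * N - 1)) := by
  rw [LFsum, Finset.sum_sub_distrib]
  have h1 : ∑ n ∈ Finset.Icc 1 N, Real.log ((K : ℝ) - n + 1)
      = logFact K - logFact (K - N) := by
    have e1 : ∑ n ∈ Finset.Icc 1 N, Real.log ((K : ℝ) - n + 1)
        = ∑ n ∈ Finset.Icc 1 N, (fun j : ℕ => Real.log (j : ℝ)) (K + 1 - n) := by
      apply Finset.sum_congr rfl
      intro n hn
      simp only [Finset.mem_Icc] at hn
      have hn' : n ≤ K + 1 := by omega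
      congr 1
      push_cast [hn']
      ring
    rw [e1, sum_Icc_shift_reflect (fun j : ℕ => Real.log (j : ℝ)) K N (by omega), sum_Ioc_logFact (by omega)]
  have h2 : ∑ n ∈ Finset.Icc 1 N, Real.log ((K : ℝ) - 2 * N + n - 1)
      = logFact (K - N - 1) - logFact (K - 2 * N - 1) := by
    have e2 : ∑ n ∈ Finset.Icc 1 N, Real.log ((K : ℝ) - 2 * N + n - 1)
        = ∑ n ∈ Finset.Icc 1 N, (fun m : ℕ => Real.log ((K - 2 * N - 1 + m : ℕ) : ℝ)) n := by
      apply Finset.sum_congr rfl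
      intro n hn
      simp only [Finset.mem_Icc] at hn
      have hn' : 2 * N + 1 ≤ K := by omega
      congr 1
      have : ((K - 2 * N - 1 + n : ℕ) : ℝ) = (K : ℝ) - 2 * N - 1 + n := by
        have hx : (((K - 2 * N - 1 : ℕ)) : ℝ) = (K : ℝ) - 2 * N - 1 := by
          have : 2 * N + 1 ≤ K := hn'
          push_cast [Nat.cast_sub (by omega : 1 ≤ K - 2 * N), Nat.cast_sub (by omega : 2 * N ≤ K)]
          ring
        push_cast [← hx]
        ring
      rw [this]
      ring
    rw [e2, ← sum_Icc_reflect (fun m : ℕ => Real.log ((K - 2 * N - 1 + m : ℕ) : ℝ)) N]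
    have e3 : ∑ n ∈ Finset.Icc 1 N, Real.log ((K - 2 * N - 1 + (N + 1 - n) : ℕ) : ℝ)
        = ∑ n ∈ Finset.Icc 1 N, (fun j : ℕ => Real.log (j : ℝ)) ((K - N - 1) + 1 - n) := by
      apply Finset.sum_congr rfl
      intro n hn
      simp only [Finset.mem_Icc] at hn
      congr 2
      omega
    rw [e3, sum_Icc_shift_reflect (fun j : ℕ => Real.log (j : ℝ)) (K - N - 1) N (by omega)]
    rw [show K - N - 1 - N = K - 2 * N - 1 by omega]
    exact sum_Ioc_logFact (by omega)
  rw [h1, h2]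

noncomputable def piece (m : ℕ) : ℝ := ((m : ℝ) + 1 / 2) * Real.log m - m

noncomputable def Est (K N : ℕ) : ℝ :=
  piece K - piece (K - N) - piece (K - N - 1) + piece (K - 2 * N - 1)

noncomputable def mval (K N : ℕ) : ℝ :=
  (K : ℝ) * (Real.log (((K : ℝ) / N) / ((K : ℝ) / N - 1))
      + (((K : ℝ) / N - 2) / ((K : ℝ) / N)) * Real.log (((K : ℝ) / N - 2) / ((K : ℝ) / N - 1)))
    + (1 / 2) * Real.log (((K : ℝ) / N) / ((K : ℝ) / N - 2))

lemma LF_Est {K N : ℕ} (h : 2 * N + 2 ≤ K) :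
    LFsum K N - Est K N = stirlingRem K - stirlingRem (K - N) - stirlingRem (K - N - 1)
      + stirlingRem (K - 2 * N - 1) := by
  have hl : ∀ m : ℕ, stirlingRem m = logFact m - piece m := by
    intro m
    rw [stirlingRem, piece]
    ring
  rw [LF_eq h, Est, hl, hl, hl, hl]
  ring

lemma Est_mval {K N : ℕ} (h : 2 * N + 2 ≤ K) (hN : 1 ≤ N) :
    Est K N - mval K N
      = (((K - N : ℕ) : ℝ) - 1 / 2) * (Real.log ((K - N : ℕ) : ℝ) - Real.log (((K - N : ℕ) : ℝ) - 1))
      - (((K - 2 * N : ℕ) : ℝ) - 1 / 2) * (Real.log ((K - 2 * N : ℕ) : ℝ) - Real.log (((K - 2 * N : ℕ) : ℝ) - 1)) := by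
  have hKN : ((K - N : ℕ) : ℝ) = (K : ℝ) - N := by
    push_cast [Nat.cast_sub (by omega : N ≤ K)]; ring
  have hKN1 : ((K - N - 1 : ℕ) : ℝ) = (K : ℝ) - N - 1 := by
    push_cast [Nat.cast_sub (by omega : N + 1 ≤ K)]
    rw [show K - N - 1 = K - (N + 1) by omega]
    push_cast [Nat.cast_sub (by omega : N + 1 ≤ K)]; ring
  have hK2N : ((K - 2 * N : ℕ) : ℝ) = (K : ℝ) - 2 * N := by
    push_cast [Nat.cast_sub (by omega : 2 * N ≤ K)]; ring
  have hK2N1 : ((K - 2 * N - 1 : ℕ) : ℝ) = (K : ℝ) - 2 * N - 1 := by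
    rw [show K - 2 * N - 1 = K - (2 * N + 1) by omega]
    push_cast [Nat.cast_sub (by omega : 2 * N + 1 ≤ K)]; ring
  have hN1 : (1 : ℝ) ≤ N := by exact_mod_cast hN
  have hK' : (2 * N + 2 : ℝ) ≤ K := by exact_mod_cast h
  have hN0 : (0 : ℝ) < N := by linarith
  have hKpos : (0 : ℝ) < K := by linarith
  have hKNpos : (0 : ℝ) < (K : ℝ) - N := by linarith
  have hKN1pos : (0 : ℝ) < (K : ℝ) - N - 1 := by linarith
  have hK2Npos : (0 : ℝ) < (K : ℝ) - 2 * N := by linarith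
  have hK2N1pos : (0 : ℝ) < (K : ℝ) - 2 * N - 1 := by linarith
  have hq1 : (K : ℝ) / N - 1 = ((K : ℝ) - N) / N := by field_simp
  have hq2 : (K : ℝ) / N - 2 = ((K : ℝ) - 2 * N) / N := by field_simp
  have hdd : ∀ a b : ℝ, 0 < b → (a / (N : ℝ)) / (b / (N : ℝ)) = a / b := by
    intro a b hb
    rw [div_div_div_eq]
    rw [mul_comm a (N : ℝ), mul_div_mul_left _ _ hN0.ne']
  have l1 : Real.log (((K : ℝ) / N) / ((K : ℝ) / N - 1)) = Real.log K - Real.log ((K : ℝ) - N) := by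
    rw [hq1, hdd _ _ hKNpos]
    exact Real.log_div hKpos.ne' hKNpos.ne'
  have l2 : Real.log (((K : ℝ) / N - 2) / ((K : ℝ) / N - 1))
      = Real.log ((K : ℝ) - 2 * N) - Real.log ((K : ℝ) - N) := by
    rw [hq1, hq2, hdd _ _ hKNpos]
    exact Real.log_div hK2Npos.ne' hKNpos.ne'
  have l3 : Real.log (((K : ℝ) / N) / ((K : ℝ) / N - 2)) = Real.log K - Real.log ((K : ℝ) - 2 * N) := by
    rw [hq2, hdd _ _ hK2Npos]
    exact Real.log_div hKpos.ne' hK2Npos.ne'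
  have l4 : ((K : ℝ) / N - 2) / ((K : ℝ) / N) = ((K : ℝ) - 2 * N) / K := by
    rw [hq2, hdd _ _ hKpos]
  rw [Est, mval, piece, piece, piece, piece, hKN, hKN1, hK2N, hK2N1, l1, l2, l3, l4]
  field_simp
  ring

theorem statement15 (γ : ℝ) (hγ : 2 < γ) (M : ℕ → ℕ)
    (hM : ∀ N : ℕ, 2 * N + 2 ≤ M N)
    (hlim : Tendsto (fun N : ℕ => (M N : ℝ) / N) atTop (nhds γ)) :
    Tendsto (fun N : ℕ =>
      (∑ n ∈ Finset.Icc 1 N,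
        (digamma (((M N : ℝ) - N - n + 1) / 2 + ((N : ℝ) + 1) / 2)
          - digamma (((M N : ℝ) - N - n + 1) / 2)))
      - ((M N : ℝ) *
          (Real.log (((M N : ℝ) / N) / ((M N : ℝ) / N - 1))
            + (((M N : ℝ) / N - 2) / ((M N : ℝ) / N)) *
              Real.log (((M N : ℝ) / N - 2) / ((M N : ℝ) / N - 1)))
        + (1 / 2) * Real.log (((M N : ℝ) / N) / ((M N : ℝ) / N - 2))))
      atTop (nhds 0) := by

  have hq : (0 : ℝ) < (γ - 2) / 2 := by linarith
  set q : ℝ := (γ - 2) / 2 with hq_def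
  -- eventual lower bound on M/N
  have hev : ∀ᶠ N : ℕ in atTop, (γ + 2) / 2 < (M N : ℝ) / N :=
    hlim.eventually (eventually_gt_nhds (by linarith))
  have hev2 : ∀ᶠ N : ℕ in atTop, q * N ≤ (M N : ℝ) - 2 * N := by
    filter_upwards [hev, eventually_ge_atTop 1] with N h1 h2
    have hN0 : (0 : ℝ) < N := by exact_mod_cast h2
    have := (lt_div_iff₀ hN0).mp h1
    rw [hq_def]
    nlinarith
  -- nat sequences to atTop
  have a1 : Tendsto (fun N => M N) atTop atTop :=
    tendsto_atTop_mono (fun N => by simp only [id_eq]; have := hM N; omega) tendsto_id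
  have a2 : Tendsto (fun N => M N - N) atTop atTop :=
    tendsto_atTop_mono (fun N => by simp only [id_eq]; have := hM N; omega) tendsto_id
  have a3 : Tendsto (fun N => M N - N - 1) atTop atTop :=
    tendsto_atTop_mono (fun N => by simp only [id_eq]; have := hM N; omega) tendsto_id
  have a4 : Tendsto (fun N => M N - 2 * N) atTop atTop := by
    rw [tendsto_atTop]
    intro b
    have hb : ∀ᶠ N : ℕ in atTop, (b : ℝ) ≤ q * N := by
      have : Tendsto (fun N : ℕ => q * (N : ℝ)) atTop atTop :=
        (tendsto_natCast_atTop_atTop).const_mul_atTop hq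
      exact this.eventually_ge_atTop _
    filter_upwards [hev2, hb] with N h1 h2
    have : (b : ℝ) ≤ (M N : ℝ) - 2 * N := le_trans h2 h1
    have hMN := hM N
    have hcast : ((M N - 2 * N : ℕ) : ℝ) = (M N : ℝ) - 2 * N := by
      push_cast [Nat.cast_sub (by omega : 2 * N ≤ M N)]; ring
    have : (b : ℝ) ≤ ((M N - 2 * N : ℕ) : ℝ) := by rw [hcast]; exact this
    exact_mod_cast this
  have a5 : Tendsto (fun N => M N - 2 * N - 1) atTop atTop := by
    have := (tendsto_sub_atTop_nat 1).comp a4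
    simpa [Function.comp_def] using this
  -- T2 : LF - Est → 0
  set L : ℝ := Real.log (Real.sqrt Real.pi) + (1 / 2) * Real.log 2 with hL_def
  have T2 : Tendsto (fun N => LFsum (M N) N - Est (M N) N) atTop (nhds 0) := by
    have c1 := stirlingRem_tendsto.comp a1
    have c2 := stirlingRem_tendsto.comp a2
    have c3 := stirlingRem_tendsto.comp a3
    have c4 := stirlingRem_tendsto.comp a5
    have := ((c1.sub c2).sub c3).add c4
    rw [show L - L - L + L = (0 : ℝ) by ring] at this
    refine this.congr fun N => ?_
    simp only [Function.comp]
    exact (LF_Est (hM N)).symm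
  -- T3 : Est - mval → 0
  have T3 : Tendsto (fun N => Est (M N) N - mval (M N) N) atTop (nhds 0) := by
    have b2 : Tendsto (fun N => ((M N - N : ℕ) : ℝ)) atTop atTop :=
      tendsto_natCast_atTop_atTop.comp a2
    have b4 : Tendsto (fun N => ((M N - 2 * N : ℕ) : ℝ)) atTop atTop :=
      tendsto_natCast_atTop_atTop.comp a4
    have h1 := tendsto_half_log_ratio.comp b2
    have h2 := tendsto_half_log_ratio.comp b4
    have := h1.sub h2
    rw [sub_self] at this
    refine this.congr' ?_
    filter_upwards [eventually_ge_atTop 1] with N hN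
    simp only [Function.comp]
    exact (Est_mval (hM N) hN).symm
  -- T1 : Dsum - LFsum → 0
  have T1 : Tendsto (fun N => Dsum (M N) N - LFsum (M N) N) atTop (nhds 0) := by
    apply squeeze_zero_norm' (a := fun N : ℕ => (2 / q ^ 3) * (1 / (N : ℝ)))
    · filter_upwards [hev2, eventually_ge_atTop 1] with N h1 h2
      have hN0 : (0 : ℝ) < N := by exact_mod_cast h2
      have hqN : (0 : ℝ) < q * N := by positivity
      rw [Real.norm_eq_abs]
      refine (D_LF_bound (hM N)).trans ?_
      have hc3 : (q * N) ^ 3 ≤ ((M N : ℝ) - 2 * N) ^ 3 := by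
        apply pow_le_pow_left₀ hqN.le h1
      have step : 2 * (N : ℝ) ^ 2 / ((M N : ℝ) - 2 * N) ^ 3 ≤ 2 * (N : ℝ) ^ 2 / (q * N) ^ 3 :=
        div_le_div_of_nonneg_left (by positivity) (by positivity) hc3
      refine step.trans ?_
      rw [show (2 : ℝ) * (N : ℝ) ^ 2 / (q * N) ^ 3 = (2 / q ^ 3) * (1 / N) by
        field_simp]
    · have := tendsto_one_div_atTop_nhds_zero_nat.const_mul (2 / q ^ 3)
      simpa using this
  -- assemble
  have Tall := (T1.add T2).add T3
  rw [show (0 : ℝ) + 0 + 0 = 0 by ring] at Tall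
  refine Tall.congr fun N => ?_
  rw [digamma_sum_eq (hM N)]
  rw [show mval (M N) N = (M N : ℝ) *
          (Real.log (((M N : ℝ) / N) / ((M N : ℝ) / N - 1))
            + (((M N : ℝ) / N - 2) / ((M N : ℝ) / N)) *
              Real.log (((M N : ℝ) / N - 2) / ((M N : ℝ) / N - 1)))
        + (1 / 2) * Real.log (((M N : ℝ) / N) / ((M N : ℝ) / N - 2)) from rfl]
  ring
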